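/- For all z > 0, ψ''(z) > -1/z² - 1/z³ - 1/(2z⁴), where ψ is the digamma function. -/

import Mathlib

open Filter Finset Topology Set

noncomputable def psi (z : ℝ) : ℝ := deriv (fun t => Real.log (Real.Gamma t)) z

namespace Stmt4Aux

local notation "γ" => Real.eulerMascheroniConstant

/-- limit of first derivatives: the digamma function. -/
noncomputable def D1 (x : ℝ) : ℝ :=
  -γ + ∑' k : ℕ, (((k : ℝ) + 1)⁻¹ - (x + k)⁻¹)

/-- limit of second derivatives: the trigamma function. -/
noncomputable def D2 (x : ℝ) : ℝ := ∑' k : ℕ, ((x + (k : ℝ)) ^ 2)⁻¹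

/-- limit of third derivatives. -/
noncomputable def D3 (x : ℝ) : ℝ := ∑' k : ℕ, (-2) * ((x + (k : ℝ)) ^ 3)⁻¹

lemma base_summable (p : ℕ) (hp : 1 < p) :
    Summable (fun k : ℕ => (((k : ℝ) + 1) ^ p)⁻¹) := by
  have h := Real.summable_nat_pow_inv.mpr hp
  have := (summable_nat_add_iff (f := fun n : ℕ => ((n : ℝ) ^ p)⁻¹) 1).mpr h
  simpa [Nat.cast_add] using this

lemma add_ge {a : ℝ} (ha : 0 < a) (k : ℕ) :
    min a 1 * ((k : ℝ) + 1) ≤ a + k := by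
  have h1 : min a 1 ≤ a := min_le_left _ _
  have h2 : min a 1 ≤ 1 := min_le_right _ _
  have hk : (0 : ℝ) ≤ k := Nat.cast_nonneg k
  nlinarith

lemma summable_aux {a : ℝ} (ha : 0 < a) {p : ℕ} (hp : 1 < p) :
    Summable (fun k : ℕ => ((a + (k : ℝ)) ^ p)⁻¹) := by
  have hm : 0 < min a 1 := lt_min ha one_pos
  refine Summable.of_nonneg_of_le (fun k => by positivity)
    (fun k => ?_) (((base_summable p hp).mul_left ((min a 1) ^ p)⁻¹))
  have hk : (0:ℝ) < (k : ℝ) + 1 := by positivity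
  have hle := add_ge ha k
  have h1 : (min a 1 * ((k : ℝ) + 1)) ^ p ≤ (a + k) ^ p := by
    apply pow_le_pow_left₀ (by positivity) hle
  have h2 : (0:ℝ) < (min a 1 * ((k : ℝ) + 1)) ^ p := by positivity
  calc ((a + (k:ℝ)) ^ p)⁻¹ ≤ ((min a 1 * ((k : ℝ) + 1)) ^ p)⁻¹ := by
        apply inv_anti₀ h2 h1
    _ = ((min a 1) ^ p)⁻¹ * (((k : ℝ) + 1) ^ p)⁻¹ := by
        rw [mul_pow, mul_inv]

lemma term_eq {x : ℝ} (hx : 0 < x) (k : ℕ) :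
    ((k : ℝ) + 1)⁻¹ - (x + k)⁻¹ = (x - 1) / (((k : ℝ) + 1) * (x + k)) := by
  have hk : ((k : ℝ) + 1) ≠ 0 := by positivity
  have hxk : (x + (k : ℝ)) ≠ 0 := by positivity
  field_simp
  ring

lemma key_bound {x m : ℝ} (hm : 0 < m) (hmx : m ≤ x) (hm1 : m ≤ 1) (hx : 0 < x) (k : ℕ) :
    ‖((k : ℝ) + 1)⁻¹ - (x + k)⁻¹‖ ≤ |x - 1| * m⁻¹ * (((k : ℝ) + 1) ^ 2)⁻¹ := by
  rw [term_eq hx k, Real.norm_eq_abs, abs_div]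
  have hk : (0:ℝ) < (k : ℝ) + 1 := by positivity
  have hxk : (0:ℝ) < x + k := by positivity
  have hd : |((k : ℝ) + 1) * (x + k)| = ((k : ℝ) + 1) * (x + k) := by
    rw [abs_of_pos (by positivity)]
  rw [hd]
  have hle : m * ((k : ℝ) + 1) ≤ x + k := by
    have hk0 : (0:ℝ) ≤ k := Nat.cast_nonneg k
    nlinarith
  have hge : m * ((k : ℝ) + 1) ^ 2 ≤ ((k : ℝ) + 1) * (x + k) := by
    calc m * ((k : ℝ) + 1) ^ 2 = ((k : ℝ) + 1) * (m * ((k : ℝ) + 1)) := by ring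
      _ ≤ ((k : ℝ) + 1) * (x + k) := by
          apply mul_le_mul_of_nonneg_left hle (le_of_lt hk)
  rw [div_le_iff₀ (by positivity)]
  have h1 : |x - 1| * m⁻¹ * (((k : ℝ) + 1) ^ 2)⁻¹ * (((k : ℝ) + 1) * (x + k))
      = |x - 1| * (m⁻¹ * (((k : ℝ) + 1) ^ 2)⁻¹ * (((k : ℝ) + 1) * (x + k))) := by ring
  rw [h1]
  have h2 : (1:ℝ) ≤ m⁻¹ * (((k : ℝ) + 1) ^ 2)⁻¹ * (((k : ℝ) + 1) * (x + k)) := by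
    rw [show m⁻¹ * (((k : ℝ) + 1) ^ 2)⁻¹ * (((k : ℝ) + 1) * (x + k))
        = (((k : ℝ) + 1) * (x + k)) / (m * (((k : ℝ) + 1) ^ 2)) by
      field_simp]
    rw [le_div_iff₀ (by positivity)]
    linarith
  nlinarith [abs_nonneg (x - 1)]

lemma harmonic_cast (n : ℕ) :
    ((harmonic n : ℚ) : ℝ) = ∑ k ∈ Finset.range n, ((k : ℝ) + 1)⁻¹ := by
  rw [harmonic]
  push_cast
  rfl

lemma hasDerivAt_logGammaSeq {x : ℝ} (hx : 0 < x) (n : ℕ) :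
    HasDerivAt (fun x => Real.BohrMollerup.logGammaSeq x n)
      (Real.log n - ∑ m ∈ Finset.range (n + 1), (x + (m : ℝ))⁻¹) x := by
  have h1 : HasDerivAt (fun x : ℝ => x * Real.log n + Real.log (Nat.factorial n))
      (Real.log n) x := (hasDerivAt_mul_const _).add_const _
  have h2 : HasDerivAt (fun x : ℝ => ∑ m ∈ Finset.range (n + 1), Real.log (x + m))
      (∑ m ∈ Finset.range (n + 1), (x + (m : ℝ))⁻¹) x := by
    apply HasDerivAt.fun_sum
    intro m _
    have hxm : x + (m : ℝ) ≠ 0 := by positivity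
    have := ((hasDerivAt_id x).add_const (m : ℝ)).log hxm
    simpa [one_div] using this
  have := h1.sub h2
  simpa [Real.BohrMollerup.logGammaSeq, Pi.sub_def] using this

lemma level1 {a b x : ℝ} (ha : 0 < a) (ha1 : a ≤ 1) (hx : x ∈ Set.Ioo a b) :
    HasDerivAt (fun t => Real.log (Real.Gamma t)) (D1 x) x := by
  have hb : 0 < b := ha.trans (hx.1.trans hx.2)
  -- uniform convergence of the series of differences
  have hu : Summable (fun k : ℕ => (b + 1) * a⁻¹ * (((k : ℝ) + 1) ^ 2)⁻¹) :=
    (base_summable 2 one_lt_two).mul_left _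
  have hS : TendstoUniformlyOn
      (fun (t : ℕ) (x : ℝ) => ∑ k ∈ Finset.range t, (((k : ℝ) + 1)⁻¹ - (x + k)⁻¹))
      (fun x => ∑' k : ℕ, (((k : ℝ) + 1)⁻¹ - (x + k)⁻¹)) atTop (Set.Ioo a b) := by
    apply tendstoUniformlyOn_tsum_nat hu
    intro k x hx'
    have hx0 : 0 < x := ha.trans hx'.1
    calc ‖((k : ℝ) + 1)⁻¹ - (x + k)⁻¹‖
        ≤ |x - 1| * a⁻¹ * (((k : ℝ) + 1) ^ 2)⁻¹ :=
          key_bound ha hx'.1.le ha1 hx0 k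
      _ ≤ (b + 1) * a⁻¹ * (((k : ℝ) + 1) ^ 2)⁻¹ := by
          have hab : |x - 1| ≤ b + 1 := by
            rw [abs_le]
            constructor <;> nlinarith [hx'.1, hx'.2]
          gcongr
  have hS' : TendstoUniformlyOn
      (fun (n : ℕ) (x : ℝ) => ∑ k ∈ Finset.range (n + 1), (((k : ℝ) + 1)⁻¹ - (x + k)⁻¹))
      (fun x => ∑' k : ℕ, (((k : ℝ) + 1)⁻¹ - (x + k)⁻¹)) atTop (Set.Ioo a b) :=
    fun u hu' => (tendsto_add_atTop_nat 1).eventually (hS u hu')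
  -- convergence of the constants
  have hc : Tendsto (fun n : ℕ =>
      Real.log n - ∑ k ∈ Finset.range (n + 1), ((k : ℝ) + 1)⁻¹) atTop (𝓝 (-γ)) := by
    have hharm : Tendsto (fun n : ℕ => (harmonic (n + 1) : ℝ) - Real.log ((n : ℝ) + 1))
        atTop (𝓝 γ) := by
      have := Real.tendsto_harmonic_sub_log.comp (tendsto_add_atTop_nat 1)
      apply this.congr
      intro n
      simp only [Function.comp]
      push_cast
      ring_nf
    have hlog : Tendsto (fun n : ℕ => Real.log ((n : ℝ) + 1) - Real.log n) atTop (𝓝 0) :=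
      Real.tendsto_log_nat_add_one_sub_log
    have h := hharm.neg.sub hlog
    rw [show -γ - 0 = -γ by ring] at h
    apply h.congr
    intro n
    rw [← harmonic_cast (n + 1)]
    push_cast
    ring
  have hconstU : TendstoUniformlyOn
      (fun (n : ℕ) (_ : ℝ) => Real.log n - ∑ k ∈ Finset.range (n + 1), ((k : ℝ) + 1)⁻¹)
      (fun _ => -γ) atTop (Set.Ioo a b) := hc.tendstoUniformlyOn_const _
  have hF' : TendstoUniformlyOn
      (fun (n : ℕ) (x : ℝ) => Real.log n - ∑ m ∈ Finset.range (n + 1), (x + (m : ℝ))⁻¹)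
      D1 atTop (Set.Ioo a b) := by
    have h := hconstU.add hS'
    have h2 : TendstoUniformlyOn
        (fun (n : ℕ) (x : ℝ) => Real.log n - ∑ m ∈ Finset.range (n + 1), (x + (m : ℝ))⁻¹)
        (fun x => -γ + ∑' k : ℕ, (((k : ℝ) + 1)⁻¹ - (x + k)⁻¹)) atTop (Set.Ioo a b) := by
      apply h.congr
      filter_upwards with n
      intro x _
      simp only [Pi.add_apply, Finset.sum_sub_distrib]
      ring
    exact h2
  refine hasDerivAt_of_tendstoUniformlyOn
    (f := fun (n : ℕ) (x : ℝ) => Real.BohrMollerup.logGammaSeq x n) isOpen_Ioo hF' ?_ ?_ hx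
  · filter_upwards with n
    intro y hy
    exact hasDerivAt_logGammaSeq (ha.trans hy.1) n
  · intro y hy
    exact Real.BohrMollerup.tendsto_log_gamma (ha.trans hy.1)

lemma summable_term1 {x : ℝ} (hx : 0 < x) :
    Summable (fun k : ℕ => ((k : ℝ) + 1)⁻¹ - (x + k)⁻¹) := by
  have hm : 0 < min x 1 := lt_min hx one_pos
  apply Summable.of_norm
  refine Summable.of_nonneg_of_le (fun k => norm_nonneg _) (fun k => ?_)
    ((base_summable 2 one_lt_two).mul_left (|x - 1| * (min x 1)⁻¹))
  have := key_bound hm (min_le_left x 1) (min_le_right x 1) hx k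
  calc ‖((k : ℝ) + 1)⁻¹ - (x + k)⁻¹‖ ≤ |x - 1| * (min x 1)⁻¹ * (((k : ℝ) + 1) ^ 2)⁻¹ := this
    _ = |x - 1| * (min x 1)⁻¹ * (((k : ℝ) + 1) ^ 2)⁻¹ := rfl

lemma level2 {a b x : ℝ} (ha : 0 < a) (hx : x ∈ Set.Ioo a b) :
    HasDerivAt D1 (D2 x) x := by
  have hu : Summable (fun k : ℕ => ((a + (k : ℝ)) ^ 2)⁻¹) := summable_aux ha one_lt_two
  have hf' : TendstoUniformlyOn
      (fun (n : ℕ) (x : ℝ) => ∑ k ∈ Finset.range n, ((x + (k : ℝ)) ^ 2)⁻¹)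
      D2 atTop (Set.Ioo a b) := by
    apply tendstoUniformlyOn_tsum_nat hu
    intro k x hx'
    have hx0 : 0 < x := ha.trans hx'.1
    rw [Real.norm_eq_abs, abs_of_pos (by positivity)]
    apply inv_anti₀ (by positivity)
    have hax : a + (k:ℝ) ≤ x + k := by linarith [hx'.1]
    exact pow_le_pow_left₀ (by positivity) hax 2
  refine hasDerivAt_of_tendstoUniformlyOn
    (f := fun (n : ℕ) (x : ℝ) => -γ + ∑ k ∈ Finset.range n, (((k : ℝ) + 1)⁻¹ - (x + k)⁻¹))
    isOpen_Ioo hf' ?_ ?_ hx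
  · filter_upwards with n
    intro y hy
    have hy0 : 0 < y := ha.trans hy.1
    have hsum : HasDerivAt (fun x : ℝ => ∑ k ∈ Finset.range n, (((k : ℝ) + 1)⁻¹ - (x + k)⁻¹))
        (∑ k ∈ Finset.range n, ((y + (k : ℝ)) ^ 2)⁻¹) y := by
      apply HasDerivAt.fun_sum
      intro k _
      have hyk : y + (k : ℝ) ≠ 0 := by positivity
      have h1 : HasDerivAt (fun x : ℝ => (x + (k : ℝ))⁻¹) (-((y + (k:ℝ)) ^ 2)⁻¹) y := by
        have := ((hasDerivAt_id y).add_const (k : ℝ)).inv hyk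
        convert this using 1
        all_goals try rfl
        simp only [id]
        field_simp
      have := h1.const_sub (((k : ℝ) + 1)⁻¹)
      simpa using this
    have := hsum.const_add (-γ)
    exact this
  · intro y hy
    have hy0 : 0 < y := ha.trans hy.1
    have hs := summable_term1 hy0
    have := hs.hasSum.tendsto_sum_nat
    exact (this.const_add (-γ))

lemma level3 {a b x : ℝ} (ha : 0 < a) (hx : x ∈ Set.Ioo a b) :
    HasDerivAt D2 (D3 x) x := by
  have hu : Summable (fun k : ℕ => 2 * ((a + (k : ℝ)) ^ 3)⁻¹) :=
    (summable_aux ha (by norm_num : 1 < 3)).mul_left 2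
  have hf' : TendstoUniformlyOn
      (fun (n : ℕ) (x : ℝ) => ∑ k ∈ Finset.range n, (-2) * ((x + (k : ℝ)) ^ 3)⁻¹)
      D3 atTop (Set.Ioo a b) := by
    apply tendstoUniformlyOn_tsum_nat hu
    intro k x hx'
    have hx0 : 0 < x := ha.trans hx'.1
    rw [Real.norm_eq_abs, abs_mul, abs_of_pos (show (0:ℝ) < ((x + (k:ℝ)) ^ 3)⁻¹ by positivity)]
    rw [show |(-2 : ℝ)| = 2 by norm_num]
    have h2 : ((x + (k:ℝ)) ^ 3)⁻¹ ≤ ((a + (k:ℝ)) ^ 3)⁻¹ := by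
      apply inv_anti₀ (by positivity)
      have hax : a + (k:ℝ) ≤ x + k := by linarith [hx'.1]
      exact pow_le_pow_left₀ (by positivity) hax 3
    linarith
  refine hasDerivAt_of_tendstoUniformlyOn
    (f := fun (n : ℕ) (x : ℝ) => ∑ k ∈ Finset.range n, ((x + (k : ℝ)) ^ 2)⁻¹)
    isOpen_Ioo hf' ?_ ?_ hx
  · filter_upwards with n
    intro y hy
    have hy0 : 0 < y := ha.trans hy.1
    apply HasDerivAt.fun_sum
    intro k _
    have hyk : (0:ℝ) < y + (k : ℝ) := by positivity
    have hsq : (y + (k:ℝ)) ^ 2 ≠ 0 := by positivity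
    have hpow : HasDerivAt (fun x : ℝ => (x + (k : ℝ)) ^ 2) (2 * (y + (k:ℝ))) y := by
      have := ((hasDerivAt_id y).add_const (k : ℝ)).pow 2
      simpa [mul_comm, Pi.pow_def] using this
    have := hpow.inv hsq
    convert this using 1
    all_goals try rfl
    field_simp
  · intro y hy
    have hy0 : 0 < y := ha.trans hy.1
    exact (summable_aux hy0 one_lt_two).hasSum.tendsto_sum_nat

/-- The comparison function for the Euler-Maclaurin type bound. -/
noncomputable def gb (t : ℝ) : ℝ := (2 * t ^ 2)⁻¹ + (2 * t ^ 3)⁻¹ + (4 * t ^ 4)⁻¹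

lemma gb_step {t : ℝ} (ht : 0 < t) : (t ^ 3)⁻¹ < gb t - gb (t + 1) := by
  have ht1 : (0:ℝ) < t + 1 := by linarith
  have key : gb t - gb (t + 1) - (t ^ 3)⁻¹ = (2 * t + 1) / (4 * t ^ 4 * (t + 1) ^ 4) := by
    simp only [gb]
    field_simp
    ring
  have hpos : 0 < (2 * t + 1) / (4 * t ^ 4 * (t + 1) ^ 4) := by positivity
  linarith

lemma gb_tendsto : Tendsto gb atTop (𝓝 0) := by
  have t2 : Tendsto (fun t : ℝ => 2 * t ^ 2) atTop atTop :=
    (tendsto_pow_atTop two_ne_zero).const_mul_atTop two_pos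
  have t3 : Tendsto (fun t : ℝ => 2 * t ^ 3) atTop atTop :=
    (tendsto_pow_atTop three_ne_zero).const_mul_atTop two_pos
  have t4 : Tendsto (fun t : ℝ => 4 * t ^ 4) atTop atTop :=
    (tendsto_pow_atTop four_ne_zero).const_mul_atTop four_pos
  have h := (t2.inv_tendsto_atTop.add t3.inv_tendsto_atTop).add t4.inv_tendsto_atTop
  rw [show (0:ℝ) + 0 + 0 = 0 by ring] at h
  apply h.congr'
  filter_upwards [eventually_gt_atTop (0:ℝ)] with t _
  simp only [gb, Pi.inv_apply]

lemma gb_hasSum {z : ℝ} (hz : 0 < z) :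
    HasSum (fun k : ℕ => gb (z + k) - gb (z + k + 1)) (gb z) := by
  have hnonneg : ∀ k : ℕ, 0 ≤ gb (z + k) - gb (z + k + 1) := by
    intro k
    have hk : (0:ℝ) < z + k := by positivity
    have := gb_step hk
    have hp : (0:ℝ) < ((z + (k:ℝ)) ^ 3)⁻¹ := by positivity
    linarith
  rw [hasSum_iff_tendsto_nat_of_nonneg hnonneg]
  have hpartial : ∀ n : ℕ, ∑ k ∈ Finset.range n, (gb (z + k) - gb (z + k + 1))
      = gb z - gb (z + n) := by
    intro n
    have h := Finset.sum_range_sub' (f := fun i : ℕ => gb (z + i)) n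
    simp only [Nat.cast_zero, add_zero] at h
    rw [← h]
    apply Finset.sum_congr rfl
    intro k _
    push_cast
    ring_nf
  have hA : Tendsto (fun n : ℕ => z + (n : ℝ)) atTop atTop :=
    tendsto_atTop_add_const_left _ z tendsto_natCast_atTop_atTop
  have h0 : Tendsto (fun n : ℕ => gb (z + n)) atTop (𝓝 0) := gb_tendsto.comp hA
  have h2 : Tendsto (fun n : ℕ => gb z - gb (z + n)) atTop (𝓝 (gb z - 0)) :=
    tendsto_const_nhds.sub h0
  rw [sub_zero] at h2
  exact Tendsto.congr (fun n => (hpartial n).symm) h2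

end Stmt4Aux

theorem stmt_4 (z : ℝ) (hz : 0 < z) :
    deriv (deriv psi) z > -(1 / z ^ 2) - 1 / z ^ 3 - 1 / (2 * z ^ 4) := by
  have ha : (0:ℝ) < min z 1 / 2 := by
    have := lt_min hz one_pos
    linarith
  set a := min z 1 / 2 with ha_def
  have ha1 : a ≤ 1 := by
    have := min_le_right z 1
    rw [ha_def]; linarith
  have haz : a < z := by
    have := min_le_left z 1
    rw [ha_def]; linarith
  have hz_mem : z ∈ Set.Ioo a (z + 1) := ⟨haz, by linarith⟩
  have h1 : ∀ x ∈ Set.Ioo a (z + 1), psi x = Stmt4Aux.D1 x := by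
    intro x hxm
    exact (Stmt4Aux.level1 ha ha1 hxm).deriv
  have h2 : ∀ x ∈ Set.Ioo a (z + 1), deriv psi x = Stmt4Aux.D2 x := by
    intro x hxm
    have he : psi =ᶠ[𝓝 x] Stmt4Aux.D1 :=
      Filter.eventuallyEq_of_mem (isOpen_Ioo.mem_nhds hxm) h1
    rw [he.deriv_eq]
    exact (Stmt4Aux.level2 ha hxm).deriv
  have h3 : deriv (deriv psi) z = Stmt4Aux.D3 z := by
    have he : deriv psi =ᶠ[𝓝 z] Stmt4Aux.D2 :=
      Filter.eventuallyEq_of_mem (isOpen_Ioo.mem_nhds hz_mem) h2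
    rw [he.deriv_eq]
    exact (Stmt4Aux.level3 ha hz_mem).deriv
  rw [h3]
  have hHS := Stmt4Aux.gb_hasSum hz
  have hlt : ∑' k : ℕ, ((z + (k:ℝ)) ^ 3)⁻¹ < Stmt4Aux.gb z := by
    have hstrict : ((z + ((0:ℕ):ℝ)) ^ 3)⁻¹ < Stmt4Aux.gb (z + ((0:ℕ):ℝ)) - Stmt4Aux.gb (z + ((0:ℕ):ℝ) + 1) :=
      Stmt4Aux.gb_step (by positivity)
    have := Summable.tsum_lt_tsum_of_nonneg (i := 0)
      (fun k => by positivity)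
      (fun k => (Stmt4Aux.gb_step (show (0:ℝ) < z + k by positivity)).le)
      hstrict hHS.summable
    rwa [hHS.tsum_eq] at this
  have hD3 : Stmt4Aux.D3 z = -2 * ∑' k : ℕ, ((z + (k:ℝ)) ^ 3)⁻¹ := by
    rw [Stmt4Aux.D3, tsum_mul_left]
  rw [hD3]
  have hgz : -(1 / z ^ 2) - 1 / z ^ 3 - 1 / (2 * z ^ 4) = -2 * Stmt4Aux.gb z := by
    rw [Stmt4Aux.gb]
    field_simp
    ring
  rw [hgz]
  exact mul_lt_mul_of_neg_left hlt (by norm_num : (-2:ℝ) < 0)
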